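/- arXiv:2107.06936 — 3 statements merged into one kernel-verified Lean document; each statement's English description precedes it below -/
import Mathlib

section
/- Let u(s)=−s²/(2Δ) with Δ>0, and let c := (√((2κΔ+α−1)²+8κΔ) − (2κΔ+α−1))/(4κ). Then the fixed-point system q=(r+h²)/(2κ+r−r̄)², ρ=1/(2κ+r−r̄)+(r+h²)/(2κ+r−r̄)², r=α·𝔼[(𝔼_ξ u'(θ)e^{u(θ)}/𝔼_ξ e^{u(θ)})²], r̄=α·𝔼[𝔼_ξ(u''(θ)+u'(θ)²)e^{u(θ)}/𝔼_ξ e^{u(θ)}] has a unique solution with 0≤q<ρ, given explicitly by q = c²(h²(Δ+c)²+Δ*α)/((Δ+c)²−αc²), ρ = q+c, r = α(Δ*+q)/(Δ+c)², and r̄ = r − α/(Δ+c); moreover this q is positive whenever h²+Δ*>0. -/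
open MeasureTheory ProbabilityTheory Real Filter

noncomputable section

/-- Standard gaussian measure on `ℝ`. -/
def stdG : Measure ℝ := gaussianReal 0 1

/-- Law of the disorder `(G, z)`: i.i.d. standard gaussian matrix entries and
i.i.d. `N(0, Δ*)` noise. -/
def disorder (M N : ℕ) (Δ : ℝ) : Measure ((Fin M → Fin N → ℝ) × (Fin M → ℝ)) :=
  (Measure.pi fun _ : Fin M => Measure.pi fun _ : Fin N => gaussianReal 0 1).prod
    (Measure.pi fun _ : Fin M => gaussianReal 0 Δ.toNNReal)

/-- `S_k(σ) = (Ḡ σ)_k` with `Ḡ = G/√N`. -/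
def Sk {M N : ℕ} (G : Fin M → Fin N → ℝ) (σ : Fin N → ℝ) (k : Fin M) : ℝ :=
  (∑ i, G k i * σ i) / Real.sqrt (N : ℝ)

/-- Assumption 1 of the paper on the log-likelihood `u`. -/
def Assumption1 (u : ℝ → ℝ) (d : ℝ) : Prop :=
  ConcaveOn ℝ Set.univ u ∧ (∀ s, u s ≤ 0) ∧ ContDiff ℝ 4 u ∧
  |u 0| ≤ d ∧ |deriv u 0| ≤ d ∧
  (∀ s, |iteratedDeriv 2 u s| ≤ d) ∧ (∀ s, |iteratedDeriv 3 u s| ≤ d) ∧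
  (∀ s, |iteratedDeriv 4 u s| ≤ d) ∧
  (∀ s, |deriv u s| ≤ d * (1 + Real.sqrt |u s|))

/-- `θ = z̃ √(Δ*+q) + ξ √(ρ−q)`. -/
def theta (Δs q ρ zt ξ : ℝ) : ℝ := zt * Real.sqrt (Δs + q) + ξ * Real.sqrt (ρ - q)

/-- `Φ(q,ρ) = α 𝔼 (𝔼_ξ u'(θ) e^{u(θ)} / 𝔼_ξ e^{u(θ)})²`. -/
def PhiR (u : ℝ → ℝ) (α Δs q ρ : ℝ) : ℝ :=
  α * ∫ zt, ((∫ ξ, deriv u (theta Δs q ρ zt ξ) * Real.exp (u (theta Δs q ρ zt ξ)) ∂stdG) /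
      (∫ ξ, Real.exp (u (theta Δs q ρ zt ξ)) ∂stdG)) ^ 2 ∂stdG

/-- `Φ̄(q,ρ) = α 𝔼 [𝔼_ξ (u''(θ)+u'(θ)²) e^{u(θ)} / 𝔼_ξ e^{u(θ)}]`. -/
def PhiQ (u : ℝ → ℝ) (α Δs q ρ : ℝ) : ℝ :=
  α * ∫ zt, (∫ ξ, (iteratedDeriv 2 u (theta Δs q ρ zt ξ) + (deriv u (theta Δs q ρ zt ξ)) ^ 2)
        * Real.exp (u (theta Δs q ρ zt ξ)) ∂stdG) /
      (∫ ξ, Real.exp (u (theta Δs q ρ zt ξ)) ∂stdG) ∂stdG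

/-- The fixed-point system (12)-(15), on the domain `0 ≤ q < ρ`. -/
def isFixedPoint (u : ℝ → ℝ) (α κ h Δs : ℝ) (p : ℝ × ℝ × ℝ × ℝ) : Prop :=
  0 ≤ p.1 ∧ p.1 < p.2.1 ∧
  p.1 = (p.2.2.1 + h ^ 2) / (2 * κ + p.2.2.1 - p.2.2.2) ^ 2 ∧
  p.2.1 = 1 / (2 * κ + p.2.2.1 - p.2.2.2) + (p.2.2.1 + h ^ 2) / (2 * κ + p.2.2.1 - p.2.2.2) ^ 2 ∧
  p.2.2.1 = PhiR u α Δs p.1 p.2.1 ∧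
  p.2.2.2 = PhiQ u α Δs p.1 p.2.1

/-- The replica-symmetric free energy functional `F(q,ρ)`. -/
def Ffunc (u : ℝ → ℝ) (α κ h Δs q ρ : ℝ) : ℝ :=
  α * (∫ zt, Real.log (∫ ξ, Real.exp (u (theta Δs q ρ zt ξ)) ∂stdG) ∂stdG) +
  (1 / 2) * (Real.log (ρ - q) + h ^ 2 * (ρ - q) + ρ / (ρ - q) - 2 * κ * ρ +
    Real.log (2 * Real.pi))

/-- The Shcherbina–Tirozzi Hamiltonian. -/
def Ham {M N : ℕ} (u : ℝ → ℝ) (h κ : ℝ) (G : Fin M → Fin N → ℝ) (z : Fin M → ℝ)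
    (σ : Fin N → ℝ) : ℝ :=
  (∑ k, u (Sk G σ k + z k)) - h * (∑ i, σ i) - κ * (∑ i, (σ i) ^ 2)

/-- Partition function. -/
def Zpart {M N : ℕ} (u : ℝ → ℝ) (h κ : ℝ) (G : Fin M → Fin N → ℝ) (z : Fin M → ℝ) : ℝ :=
  ∫ σ : Fin N → ℝ, Real.exp (Ham u h κ G z σ)

/-- Free energy `F_N = (1/N) ln Z`. -/
def freeEnergy {M N : ℕ} (u : ℝ → ℝ) (h κ : ℝ) (G : Fin M → Fin N → ℝ)
    (z : Fin M → ℝ) : ℝ :=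
  (1 / (N : ℝ)) * Real.log (Zpart u h κ G z)

/-- Gibbs expectation of a one-replica observable. -/
def gibbs1 {M N : ℕ} (u : ℝ → ℝ) (h κ : ℝ) (G : Fin M → Fin N → ℝ) (z : Fin M → ℝ)
    (f : (Fin N → ℝ) → ℝ) : ℝ :=
  (∫ σ : Fin N → ℝ, f σ * Real.exp (Ham u h κ G z σ)) / Zpart u h κ G z

/-- Gibbs expectation of a two-replica observable. -/
def gibbs2 {M N : ℕ} (u : ℝ → ℝ) (h κ : ℝ) (G : Fin M → Fin N → ℝ) (z : Fin M → ℝ)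
    (f : (Fin N → ℝ) → (Fin N → ℝ) → ℝ) : ℝ :=
  (∫ σ1 : Fin N → ℝ, ∫ σ2 : Fin N → ℝ,
      f σ1 σ2 * Real.exp (Ham u h κ G z σ1 + Ham u h κ G z σ2)) / (Zpart u h κ G z) ^ 2


section Helpers
open Set Topology

lemma tendsto_mul_exp_neg_sq {p : ℝ} (hp : 0 < p) :
    Tendsto (fun x : ℝ => x * exp (-p * x ^ 2)) atBot (𝓝 0) ∧
    Tendsto (fun x : ℝ => x * exp (-p * x ^ 2)) atTop (𝓝 0) := by
  have h := (tendsto_rpow_abs_mul_exp_neg_mul_sq_cocompact hp 1).congr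
    (fun x => by rw [Real.rpow_one])
  rw [cocompact_eq_atBot_atTop, tendsto_sup] at h
  constructor
  · refine squeeze_zero_norm (fun x => ?_) h.1
    rw [norm_mul, Real.norm_eq_abs, Real.norm_eq_abs, abs_exp]
  · refine squeeze_zero_norm (fun x => ?_) h.2
    rw [norm_mul, Real.norm_eq_abs, Real.norm_eq_abs, abs_exp]

lemma tendsto_exp_neg_sq {p : ℝ} (hp : 0 < p) :
    Tendsto (fun x : ℝ => exp (-p * x ^ 2)) atBot (𝓝 0) ∧
    Tendsto (fun x : ℝ => exp (-p * x ^ 2)) atTop (𝓝 0) := by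
  have htop : Tendsto (fun x : ℝ => exp (-p * x ^ 2)) atTop (𝓝 0) := by
    refine Real.tendsto_exp_atBot.comp ?_
    exact (tendsto_pow_atTop two_ne_zero).const_mul_atTop_of_neg (by linarith)
  refine ⟨?_, htop⟩
  have : (fun x : ℝ => exp (-p * x ^ 2)) = (fun x : ℝ => exp (-p * x ^ 2)) ∘ Neg.neg := by
    funext x; simp [Function.comp]
  rw [this]
  exact htop.comp tendsto_neg_atBot_atTop

lemma integrable_sq_mul_exp_neg_sq {p : ℝ} (hp : 0 < p) :
    Integrable fun x : ℝ => x ^ 2 * exp (-p * x ^ 2) := by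
  have := integrable_rpow_mul_exp_neg_mul_sq hp (s := 2) (by norm_num)
  refine this.congr (ae_of_all _ fun x => ?_)
  simp [Real.rpow_natCast]

lemma integral_mul_exp_neg_sq {p : ℝ} (hp : 0 < p) :
    ∫ x : ℝ, x * exp (-p * x ^ 2) = 0 := by
  set F : ℝ → ℝ := fun x => -(1 / (2 * p)) * exp (-p * x ^ 2) with hF
  have hderiv : ∀ x : ℝ, HasDerivAt F (x * exp (-p * x ^ 2)) x := by
    intro x
    have : HasDerivAt (fun x : ℝ => -p * x ^ 2) (-p * (2 * x)) x := by
      simpa using ((hasDerivAt_pow 2 x).const_mul (-p))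
    refine (this.exp.const_mul (-(1 / (2 * p)))).congr_deriv ?_
    field_simp
  have hint : Integrable fun x : ℝ => x * exp (-p * x ^ 2) :=
    integrable_mul_exp_neg_mul_sq hp
  have h1 : ∫ x in Iic (0:ℝ), x * exp (-p * x ^ 2) = F 0 - 0 :=
    integral_Iic_of_hasDerivAt_of_tendsto' (fun x _ => hderiv x) hint.integrableOn
      (by have := (tendsto_exp_neg_sq hp).1.const_mul (-(1/(2*p))); rwa [mul_zero] at this)
  have h2 : ∫ x in Ioi (0:ℝ), x * exp (-p * x ^ 2) = 0 - F 0 :=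
    integral_Ioi_of_hasDerivAt_of_tendsto' (fun x _ => hderiv x) hint.integrableOn
      (by have := (tendsto_exp_neg_sq hp).2.const_mul (-(1/(2*p))); rwa [mul_zero] at this)
  rw [← intervalIntegral.integral_Iic_add_Ioi (b := (0:ℝ)) hint.integrableOn hint.integrableOn, h1, h2]
  ring

lemma integral_sq_mul_exp_neg_sq {p : ℝ} (hp : 0 < p) :
    ∫ x : ℝ, x ^ 2 * exp (-p * x ^ 2) = Real.sqrt (π / p) / (2 * p) := by
  set F : ℝ → ℝ := fun x => -(1 / (2 * p)) * (x * exp (-p * x ^ 2)) with hF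
  have hderiv : ∀ x : ℝ, HasDerivAt F
      (x ^ 2 * exp (-p * x ^ 2) - (1 / (2 * p)) * exp (-p * x ^ 2)) x := by
    intro x
    have h1 : HasDerivAt (fun x : ℝ => -p * x ^ 2) (-p * (2 * x)) x := by
      simpa using ((hasDerivAt_pow 2 x).const_mul (-p))
    have h2 : HasDerivAt (fun x : ℝ => x * exp (-p * x ^ 2))
        (1 * exp (-p * x ^ 2) + x * (exp (-p * x ^ 2) * (-p * (2 * x)))) x :=
      (hasDerivAt_id x).mul h1.exp
    refine (h2.const_mul (-(1 / (2 * p)))).congr_deriv ?_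
    field_simp
    ring
  have hint2 : Integrable fun x : ℝ => x ^ 2 * exp (-p * x ^ 2) :=
    integrable_sq_mul_exp_neg_sq hp
  have hint0 : Integrable fun x : ℝ => (1 / (2 * p)) * exp (-p * x ^ 2) :=
    (integrable_exp_neg_mul_sq hp).const_mul _
  have hint : Integrable fun x : ℝ =>
      x ^ 2 * exp (-p * x ^ 2) - (1 / (2 * p)) * exp (-p * x ^ 2) := hint2.sub hint0
  have hbot : Tendsto F atBot (𝓝 (-(1/(2*p)) * 0)) :=
    (tendsto_mul_exp_neg_sq hp).1.const_mul _
  have htop : Tendsto F atTop (𝓝 (-(1/(2*p)) * 0)) :=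
    (tendsto_mul_exp_neg_sq hp).2.const_mul _
  rw [mul_zero] at hbot htop
  have h1 : ∫ x in Iic (0:ℝ), (x ^ 2 * exp (-p * x ^ 2) - (1 / (2 * p)) * exp (-p * x ^ 2))
      = F 0 - 0 :=
    integral_Iic_of_hasDerivAt_of_tendsto' (fun x _ => hderiv x) hint.integrableOn hbot
  have h2 : ∫ x in Ioi (0:ℝ), (x ^ 2 * exp (-p * x ^ 2) - (1 / (2 * p)) * exp (-p * x ^ 2))
      = 0 - F 0 :=
    integral_Ioi_of_hasDerivAt_of_tendsto' (fun x _ => hderiv x) hint.integrableOn htop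
  have h0 : ∫ x : ℝ, (x ^ 2 * exp (-p * x ^ 2) - (1 / (2 * p)) * exp (-p * x ^ 2)) = 0 := by
    rw [← intervalIntegral.integral_Iic_add_Ioi (b := (0:ℝ)) hint.integrableOn hint.integrableOn, h1, h2]
    ring
  rw [integral_sub hint2 hint0, integral_const_mul, integral_gaussian] at h0
  have hr : (1:ℝ)/(2*p) * √(π/p) = √(π/p)/(2*p) := by ring
  linarith

lemma gauss_poly (p A B C : ℝ) (hp : 0 < p) :
    ∫ x : ℝ, (A + B * x + C * x ^ 2) * exp (-p * x ^ 2)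
      = (A + C / (2 * p)) * Real.sqrt (π / p) := by
  have i0 : Integrable fun x : ℝ => A * exp (-p * x ^ 2) :=
    (integrable_exp_neg_mul_sq hp).const_mul _
  have i1 : Integrable fun x : ℝ => B * (x * exp (-p * x ^ 2)) :=
    (integrable_mul_exp_neg_mul_sq hp).const_mul _
  have i2 : Integrable fun x : ℝ => C * (x ^ 2 * exp (-p * x ^ 2)) :=
    (integrable_sq_mul_exp_neg_sq hp).const_mul _
  have : (fun x : ℝ => (A + B * x + C * x ^ 2) * exp (-p * x ^ 2))
      = fun x : ℝ => A * exp (-p * x ^ 2) + B * (x * exp (-p * x ^ 2))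
          + C * (x ^ 2 * exp (-p * x ^ 2)) := by funext x; ring
  have i01 : Integrable (fun x : ℝ => A * exp (-p * x ^ 2) + B * (x * exp (-p * x ^ 2)))
      volume := i0.add i1
  rw [this]
  rw [integral_add i01 i2, integral_add i0 i1, integral_const_mul,
    integral_const_mul, integral_const_mul, integral_gaussian, integral_mul_exp_neg_sq hp,
    integral_sq_mul_exp_neg_sq hp]
  field_simp
  ring

lemma gauss_poly_shift (p m A B C : ℝ) (hp : 0 < p) :
    ∫ x : ℝ, (A + B * (x - m) + C * (x - m) ^ 2) * exp (-p * (x - m) ^ 2)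
      = (A + C / (2 * p)) * Real.sqrt (π / p) := by
  rw [← gauss_poly p A B C hp, ← integral_add_right_eq_self
    (fun y : ℝ => (A + B * (y - m) + C * (y - m) ^ 2) * exp (-p * (y - m) ^ 2)) m]
  simp

lemma integral_stdG (f : ℝ → ℝ) :
    ∫ x, f x ∂(ProbabilityTheory.gaussianReal 0 1)
      = ∫ x, f x * ProbabilityTheory.gaussianPDFReal 0 1 x := by
  rw [ProbabilityTheory.gaussianReal_of_var_ne_zero _ one_ne_zero]
  have h : ProbabilityTheory.gaussianPDF 0 1
      = fun x => ((ProbabilityTheory.gaussianPDFReal 0 1 x).toNNReal : ENNReal) := rfl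
  rw [h, integral_withDensity_eq_integral_smul
    ((ProbabilityTheory.measurable_gaussianPDFReal 0 1).real_toNNReal) f]
  congr 1
  funext x
  rw [NNReal.smul_def, smul_eq_mul, Real.coe_toNNReal _
    (ProbabilityTheory.gaussianPDFReal_nonneg 0 1 x), mul_comm]

lemma gauss_tilt (Δ a b A B C : ℝ) (hΔ : 0 < Δ) (hb : 0 < b) :
    ∫ x, (A + B * (a + b * x) + C * (a + b * x) ^ 2) *
        exp (-(a + b * x) ^ 2 / (2 * Δ)) ∂(ProbabilityTheory.gaussianReal 0 1)
      = (A + B * (a * Δ / (Δ + b ^ 2))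
          + C * ((a * Δ / (Δ + b ^ 2)) ^ 2 + b ^ 2 * Δ / (Δ + b ^ 2)))
        * (Real.sqrt (Δ / (Δ + b ^ 2)) * exp (-a ^ 2 / (2 * (Δ + b ^ 2)))) := by
  have hT : 0 < Δ + b ^ 2 := by positivity
  set T := Δ + b ^ 2 with hTdef
  set p : ℝ := T / (2 * Δ) with hpdef
  have hp : 0 < p := by positivity
  set m : ℝ := -(a * b) / T with hmdef
  set A' : ℝ := A + B * (a * Δ / T) + C * (a * Δ / T) ^ 2 with hA'
  set B' : ℝ := B * b + 2 * C * (a * Δ / T) * b with hB'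
  set C' : ℝ := C * b ^ 2 with hC'
  rw [integral_stdG]
  have key : ∀ x : ℝ,
      (A + B * (a + b * x) + C * (a + b * x) ^ 2) * exp (-(a + b * x) ^ 2 / (2 * Δ)) *
        ProbabilityTheory.gaussianPDFReal 0 1 x
      = ((Real.sqrt (2 * π))⁻¹ * exp (-a ^ 2 / (2 * T))) *
          ((A' + B' * (x - m) + C' * (x - m) ^ 2) * exp (-p * (x - m) ^ 2)) := by
    intro x
    have hpdf : ProbabilityTheory.gaussianPDFReal 0 1 x
        = (Real.sqrt (2 * π))⁻¹ * exp (-x ^ 2 / 2) := by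
      rw [ProbabilityTheory.gaussianPDFReal]
      norm_num
    have hexp : exp (-(a + b * x) ^ 2 / (2 * Δ)) * exp (-x ^ 2 / 2)
        = exp (-a ^ 2 / (2 * T)) * exp (-p * (x - m) ^ 2) := by
      rw [← Real.exp_add, ← Real.exp_add]
      congr 1
      rw [hpdef, hmdef, hTdef]
      field_simp
      ring
    have hpoly : A + B * (a + b * x) + C * (a + b * x) ^ 2
        = A' + B' * (x - m) + C' * (x - m) ^ 2 := by
      have hm : a + b * x = a * Δ / T + b * (x - m) := by
        rw [hmdef]
        field_simp
        ring
      rw [hA', hB', hC', hm]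
      ring
    rw [hpdf, hpoly]
    rw [show A' + B' * (x - m) + C' * (x - m) ^ 2 = A' + B' * (x - m) + C' * (x - m) ^ 2 from rfl]
    calc (A' + B' * (x - m) + C' * (x - m) ^ 2) * exp (-(a + b * x) ^ 2 / (2 * Δ)) *
          ((Real.sqrt (2 * π))⁻¹ * exp (-x ^ 2 / 2))
        = (Real.sqrt (2 * π))⁻¹ * ((A' + B' * (x - m) + C' * (x - m) ^ 2) *
            (exp (-(a + b * x) ^ 2 / (2 * Δ)) * exp (-x ^ 2 / 2))) := by ring
      _ = _ := by rw [hexp]; ring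
  simp only [key]
  rw [integral_const_mul, gauss_poly_shift p m A' B' C' hp]
  have hsq : Real.sqrt (π / p) = Real.sqrt (2 * π) * Real.sqrt (Δ / T) := by
    rw [← Real.sqrt_mul (by positivity)]
    congr 1
    rw [hpdef]
    field_simp
  have hs2 : (Real.sqrt (2 * π) : ℝ) ≠ 0 := by positivity
  have hCp : A' + C' / (2 * p) = A + B * (a * Δ / T) + C * ((a * Δ / T) ^ 2 + b ^ 2 * Δ / T) := by
    rw [hA', hC', hpdef]
    field_simp
    ring
  rw [hsq, hCp]
  field_simp

lemma stdG_tilt (Δ a b A B C : ℝ) (hΔ : 0 < Δ) (hb : 0 < b) :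
    ∫ x, (A + B * (a + b * x) + C * (a + b * x) ^ 2) *
        Real.exp (-(a + b * x) ^ 2 / (2 * Δ)) ∂stdG
      = (A + B * (a * Δ / (Δ + b ^ 2))
          + C * ((a * Δ / (Δ + b ^ 2)) ^ 2 + b ^ 2 * Δ / (Δ + b ^ 2)))
        * (Real.sqrt (Δ / (Δ + b ^ 2)) * Real.exp (-a ^ 2 / (2 * (Δ + b ^ 2)))) := by
  unfold stdG
  exact gauss_tilt Δ a b A B C hΔ hb

lemma stdG_poly (c0 c1 c2 : ℝ) :
    ∫ x, (c0 + c1 * x + c2 * x ^ 2) ∂stdG = c0 + c2 := by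
  unfold stdG
  rw [integral_stdG]
  have e : (fun x : ℝ => (c0 + c1 * x + c2 * x ^ 2) * ProbabilityTheory.gaussianPDFReal 0 1 x)
      = fun x : ℝ => (Real.sqrt (2 * π))⁻¹ *
          ((c0 + c1 * x + c2 * x ^ 2) * Real.exp (-(1/2) * x ^ 2)) := by
    funext x
    have hpdf : ProbabilityTheory.gaussianPDFReal 0 1 x
        = (Real.sqrt (2 * π))⁻¹ * Real.exp (-(1/2) * x ^ 2) := by
      rw [ProbabilityTheory.gaussianPDFReal]
      norm_num
      exact Or.inl (by ring)
    rw [hpdf]; ring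
  rw [e, integral_const_mul, gauss_poly (1/2) c0 c1 c2 (by norm_num : (0:ℝ) < 1/2)]
  rw [show π / (1/2 : ℝ) = 2 * π by ring]
  have h2 : (Real.sqrt (2 * π) : ℝ) ≠ 0 := by positivity
  field_simp

lemma quad_deriv (Δ : ℝ) (hΔ : Δ ≠ 0) :
    deriv (fun s : ℝ => -(s ^ 2) / (2 * Δ)) = fun s => -s / Δ := by
  funext x
  have hd : HasDerivAt (fun s : ℝ => -(s ^ 2) / (2 * Δ)) (-(2 * x ^ 1) / (2 * Δ)) x :=
    ((hasDerivAt_pow 2 x).neg).div_const (2 * Δ)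
  rw [hd.deriv]
  field_simp

lemma quad_iteratedDeriv (Δ : ℝ) (hΔ : Δ ≠ 0) :
    iteratedDeriv 2 (fun s : ℝ => -(s ^ 2) / (2 * Δ)) = fun _ => -(1 / Δ) := by
  rw [show (2:ℕ) = 1 + 1 from rfl, iteratedDeriv_succ, iteratedDeriv_one, quad_deriv Δ hΔ]
  funext x
  have hd : HasDerivAt (fun s : ℝ => -s / Δ) (-1 / Δ) x := by
    simpa using ((hasDerivAt_id x).neg).div_const Δ
  rw [hd.deriv]
  ring

lemma PhiR_eq (α Δs q ρ Δ : ℝ) (hΔ : 0 < Δ) (hΔs : 0 ≤ Δs) (hq : 0 ≤ q) (hlt : q < ρ) :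
    PhiR (fun s => -(s ^ 2) / (2 * Δ)) α Δs q ρ
      = α * (Δs + q) / (Δ + (ρ - q)) ^ 2 := by
  set u : ℝ → ℝ := fun s => -(s ^ 2) / (2 * Δ) with hu
  set sg := Real.sqrt (Δs + q) with hsg
  set b := Real.sqrt (ρ - q) with hbdef
  have hb : 0 < b := Real.sqrt_pos.2 (by linarith)
  have hb2 : b ^ 2 = ρ - q := Real.sq_sqrt (by linarith)
  have hsg2 : sg ^ 2 = Δs + q := Real.sq_sqrt (by linarith)
  have hT : 0 < Δ + (ρ - q) := by linarith
  have hθ : ∀ zt ξ : ℝ, theta Δs q ρ zt ξ = zt * sg + b * ξ := by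
    intro zt ξ; rw [theta]; ring
  have hnum : ∀ zt : ℝ,
      (∫ ξ, deriv u (theta Δs q ρ zt ξ) * Real.exp (u (theta Δs q ρ zt ξ)) ∂stdG)
      = (0 + (-(1/Δ)) * (zt * sg * Δ / (Δ + b ^ 2))
          + 0 * ((zt * sg * Δ / (Δ + b ^ 2)) ^ 2 + b ^ 2 * Δ / (Δ + b ^ 2)))
        * (Real.sqrt (Δ / (Δ + b ^ 2)) * Real.exp (-(zt * sg) ^ 2 / (2 * (Δ + b ^ 2)))) := by
    intro zt
    have e : (fun ξ => deriv u (theta Δs q ρ zt ξ) * Real.exp (u (theta Δs q ρ zt ξ)))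
        = fun ξ => (0 + (-(1/Δ)) * (zt * sg + b * ξ) + 0 * (zt * sg + b * ξ) ^ 2) *
            Real.exp (-(zt * sg + b * ξ) ^ 2 / (2 * Δ)) := by
      funext ξ
      rw [hθ, hu, quad_deriv Δ hΔ.ne']
      show (-(zt * sg + b * ξ) / Δ) * Real.exp (-(zt * sg + b * ξ) ^ 2 / (2 * Δ)) = _
      congr 1
      field_simp
      ring
    rw [e]
    exact stdG_tilt Δ (zt * sg) b 0 (-(1/Δ)) 0 hΔ hb
  have hden : ∀ zt : ℝ,
      (∫ ξ, Real.exp (u (theta Δs q ρ zt ξ)) ∂stdG)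
      = (1 + 0 * (zt * sg * Δ / (Δ + b ^ 2))
          + 0 * ((zt * sg * Δ / (Δ + b ^ 2)) ^ 2 + b ^ 2 * Δ / (Δ + b ^ 2)))
        * (Real.sqrt (Δ / (Δ + b ^ 2)) * Real.exp (-(zt * sg) ^ 2 / (2 * (Δ + b ^ 2)))) := by
    intro zt
    have e : (fun ξ => Real.exp (u (theta Δs q ρ zt ξ)))
        = fun ξ => (1 + 0 * (zt * sg + b * ξ) + 0 * (zt * sg + b * ξ) ^ 2) *
            Real.exp (-(zt * sg + b * ξ) ^ 2 / (2 * Δ)) := by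
      funext ξ
      rw [hθ, hu]
      show Real.exp (-(zt * sg + b * ξ) ^ 2 / (2 * Δ)) = _
      ring
    rw [e]
    exact stdG_tilt Δ (zt * sg) b 1 0 0 hΔ hb
  have hIpos : ∀ zt : ℝ, 0 < Real.sqrt (Δ / (Δ + b ^ 2)) *
      Real.exp (-(zt * sg) ^ 2 / (2 * (Δ + b ^ 2))) := by
    intro zt
    have : 0 < Δ / (Δ + b ^ 2) := by rw [hb2]; positivity
    positivity
  rw [PhiR]
  have hcong : (∫ zt, ((∫ ξ, deriv u (theta Δs q ρ zt ξ) * Real.exp (u (theta Δs q ρ zt ξ)) ∂stdG) /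
      (∫ ξ, Real.exp (u (theta Δs q ρ zt ξ)) ∂stdG)) ^ 2 ∂stdG)
      = ∫ zt, (0 + 0 * zt + (sg ^ 2 / (Δ + (ρ - q)) ^ 2) * zt ^ 2) ∂stdG := by
    apply integral_congr_ae
    filter_upwards with zt
    rw [hnum zt, hden zt, hb2]
    rw [mul_div_mul_right _ _ (by rw [← hb2]; exact (hIpos zt).ne')]
    field_simp
    ring
  rw [hcong, stdG_poly, hsg2]
  field_simp
  ring

lemma PhiQ_eq (α Δs q ρ Δ : ℝ) (hΔ : 0 < Δ) (hΔs : 0 ≤ Δs) (hq : 0 ≤ q) (hlt : q < ρ) :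
    PhiQ (fun s => -(s ^ 2) / (2 * Δ)) α Δs q ρ
      = α * (Δs + q) / (Δ + (ρ - q)) ^ 2 - α / (Δ + (ρ - q)) := by
  set u : ℝ → ℝ := fun s => -(s ^ 2) / (2 * Δ) with hu
  set sg := Real.sqrt (Δs + q) with hsg
  set b := Real.sqrt (ρ - q) with hbdef
  have hb : 0 < b := Real.sqrt_pos.2 (by linarith)
  have hb2 : b ^ 2 = ρ - q := Real.sq_sqrt (by linarith)
  have hsg2 : sg ^ 2 = Δs + q := Real.sq_sqrt (by linarith)
  have hT : 0 < Δ + (ρ - q) := by linarith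
  have hθ : ∀ zt ξ : ℝ, theta Δs q ρ zt ξ = zt * sg + b * ξ := by
    intro zt ξ; rw [theta]; ring
  have hnum : ∀ zt : ℝ,
      (∫ ξ, (iteratedDeriv 2 u (theta Δs q ρ zt ξ) + (deriv u (theta Δs q ρ zt ξ)) ^ 2)
          * Real.exp (u (theta Δs q ρ zt ξ)) ∂stdG)
      = ((-(1/Δ)) + 0 * (zt * sg * Δ / (Δ + b ^ 2))
          + (1/Δ^2) * ((zt * sg * Δ / (Δ + b ^ 2)) ^ 2 + b ^ 2 * Δ / (Δ + b ^ 2)))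
        * (Real.sqrt (Δ / (Δ + b ^ 2)) * Real.exp (-(zt * sg) ^ 2 / (2 * (Δ + b ^ 2)))) := by
    intro zt
    have e : (fun ξ => (iteratedDeriv 2 u (theta Δs q ρ zt ξ) + (deriv u (theta Δs q ρ zt ξ)) ^ 2)
          * Real.exp (u (theta Δs q ρ zt ξ)))
        = fun ξ => ((-(1/Δ)) + 0 * (zt * sg + b * ξ) + (1/Δ^2) * (zt * sg + b * ξ) ^ 2) *
            Real.exp (-(zt * sg + b * ξ) ^ 2 / (2 * Δ)) := by
      funext ξ
      rw [hθ, hu, quad_deriv Δ hΔ.ne', quad_iteratedDeriv Δ hΔ.ne']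
      show (-(1 / Δ) + (-(zt * sg + b * ξ) / Δ) ^ 2) *
          Real.exp (-(zt * sg + b * ξ) ^ 2 / (2 * Δ)) = _
      congr 1
      field_simp
      ring
    rw [e]
    exact stdG_tilt Δ (zt * sg) b (-(1/Δ)) 0 (1/Δ^2) hΔ hb
  have hden : ∀ zt : ℝ,
      (∫ ξ, Real.exp (u (theta Δs q ρ zt ξ)) ∂stdG)
      = (1 + 0 * (zt * sg * Δ / (Δ + b ^ 2))
          + 0 * ((zt * sg * Δ / (Δ + b ^ 2)) ^ 2 + b ^ 2 * Δ / (Δ + b ^ 2)))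
        * (Real.sqrt (Δ / (Δ + b ^ 2)) * Real.exp (-(zt * sg) ^ 2 / (2 * (Δ + b ^ 2)))) := by
    intro zt
    have e : (fun ξ => Real.exp (u (theta Δs q ρ zt ξ)))
        = fun ξ => (1 + 0 * (zt * sg + b * ξ) + 0 * (zt * sg + b * ξ) ^ 2) *
            Real.exp (-(zt * sg + b * ξ) ^ 2 / (2 * Δ)) := by
      funext ξ
      rw [hθ, hu]
      show Real.exp (-(zt * sg + b * ξ) ^ 2 / (2 * Δ)) = _
      ring
    rw [e]
    exact stdG_tilt Δ (zt * sg) b 1 0 0 hΔ hb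
  have hIpos : ∀ zt : ℝ, 0 < Real.sqrt (Δ / (Δ + b ^ 2)) *
      Real.exp (-(zt * sg) ^ 2 / (2 * (Δ + b ^ 2))) := by
    intro zt
    have : 0 < Δ / (Δ + b ^ 2) := by rw [hb2]; positivity
    positivity
  rw [PhiQ]
  have hcong : (∫ zt, (∫ ξ, (iteratedDeriv 2 u (theta Δs q ρ zt ξ) +
        (deriv u (theta Δs q ρ zt ξ)) ^ 2) * Real.exp (u (theta Δs q ρ zt ξ)) ∂stdG) /
      (∫ ξ, Real.exp (u (theta Δs q ρ zt ξ)) ∂stdG) ∂stdG)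
      = ∫ zt, ((-(1/(Δ + (ρ - q)))) + 0 * zt + (sg ^ 2 / (Δ + (ρ - q)) ^ 2) * zt ^ 2) ∂stdG := by
    apply integral_congr_ae
    filter_upwards with zt
    rw [hnum zt, hden zt, hb2]
    rw [mul_div_mul_right _ _ (by rw [← hb2]; exact (hIpos zt).ne')]
    field_simp
    ring
  rw [hcong, stdG_poly, hsg2]
  field_simp
  ring

end Helpers

set_option maxHeartbeats 1000000 in
/-- quadratic loss example: for `u(s) = −s²/(2Δ)` the fixed-point
system has the unique solution given by the explicit formulas, and `q > 0`
whenever `h² + Δ* > 0`. -/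
theorem quadratic_loss_unique_fixed_point
    (α κ h Δs Δ : ℝ) (hα : 0 < α) (hκ : 0 < κ) (hΔs : 0 ≤ Δs) (hΔ : 0 < Δ)
    (u : ℝ → ℝ) (hu : u = fun s => -(s ^ 2) / (2 * Δ))
    (c q ρ r rb : ℝ)
    (hc : c = (Real.sqrt ((2 * κ * Δ + α - 1) ^ 2 + 8 * κ * Δ) - (2 * κ * Δ + α - 1)) / (4 * κ))
    (hq : q = c ^ 2 * (h ^ 2 * (Δ + c) ^ 2 + Δs * α) / ((Δ + c) ^ 2 - α * c ^ 2))
    (hρ : ρ = q + c)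
    (hr : r = α * (Δs + q) / (Δ + c) ^ 2)
    (hrb : rb = r - α / (Δ + c)) :
    isFixedPoint u α κ h Δs (q, ρ, r, rb) ∧
    (∀ p : ℝ × ℝ × ℝ × ℝ, isFixedPoint u α κ h Δs p → p = (q, ρ, r, rb)) ∧
    (0 < h ^ 2 + Δs → 0 < q) := by
  subst hu
  set B := 2 * κ * Δ + α - 1 with hBdef
  have hS2 : Real.sqrt (B ^ 2 + 8 * κ * Δ) ^ 2 = B ^ 2 + 8 * κ * Δ :=
    Real.sq_sqrt (by positivity)
  set S := Real.sqrt (B ^ 2 + 8 * κ * Δ) with hSdef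
  have hSnn : 0 ≤ S := Real.sqrt_nonneg _
  have hSB : B < S := by nlinarith [mul_pos hκ hΔ]
  have hcpos : 0 < c := by rw [hc]; exact div_pos (by linarith) (by linarith)
  have h4 : 4 * κ * c = S - B := by rw [hc]; field_simp
  have hquad : 2 * κ * c ^ 2 + B * c - Δ = 0 := by
    have h5 : S = 4 * κ * c + B := by linarith
    rw [h5] at hS2
    have h8 : (8 * κ) * (2 * κ * c ^ 2 + B * c - Δ) = 0 := by linear_combination hS2
    have h8' : (8 * κ : ℝ) ≠ 0 := by positivity
    rcases mul_eq_zero.mp h8 with h' | h'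
    · exact absurd h' h8'
    · exact h'
  have hT : 0 < Δ + c := by linarith
  have hαc : α * c = (Δ + c) * (1 - 2 * κ * c) := by linear_combination hquad
  have hid : (Δ + c) ^ 2 - α * c ^ 2 = (Δ + c) * (Δ + 2 * κ * c ^ 2) := by
    linear_combination (-c) * hαc
  have hden : 0 < (Δ + c) ^ 2 - α * c ^ 2 := by
    rw [hid]; positivity
  have hq0 : 0 ≤ q := by
    rw [hq]; exact div_nonneg (by positivity) hden.le
  have hρq : ρ - q = c := by rw [hρ]; ring
  have hlt : q < ρ := by rw [hρ]; linarith
  have hPhiR : PhiR (fun s => -(s ^ 2) / (2 * Δ)) α Δs q ρ = α * (Δs + q) / (Δ + c) ^ 2 := by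
    rw [PhiR_eq α Δs q ρ Δ hΔ hΔs hq0 hlt, hρq]
  have hPhiQ : PhiQ (fun s => -(s ^ 2) / (2 * Δ)) α Δs q ρ
      = α * (Δs + q) / (Δ + c) ^ 2 - α / (Δ + c) := by
    rw [PhiQ_eq α Δs q ρ Δ hΔ hΔs hq0 hlt, hρq]
  have hqkey : q * ((Δ + c) ^ 2 - α * c ^ 2) = c ^ 2 * (h ^ 2 * (Δ + c) ^ 2 + Δs * α) := by
    rw [hq]; exact div_mul_cancel₀ _ hden.ne'
  have hcd : 2 * κ + r - rb = 1 / c := by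
    rw [hrb]
    field_simp
    linear_combination hquad
  have e1' : (r + h ^ 2) / (1 / c) ^ 2 = q := by
    rw [hr]
    field_simp
    linear_combination (-1 : ℝ) * hqkey
  have e1 : q = (r + h ^ 2) / (2 * κ + r - rb) ^ 2 := by rw [hcd]; exact e1'.symm
  have e2 : ρ = 1 / (2 * κ + r - rb) + (r + h ^ 2) / (2 * κ + r - rb) ^ 2 := by
    rw [hcd, one_div_one_div, e1']
    rw [hρ]; ring
  have e3 : r = PhiR (fun s => -(s ^ 2) / (2 * Δ)) α Δs q ρ := by rw [hPhiR]; exact hr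
  have e4 : rb = PhiQ (fun s => -(s ^ 2) / (2 * Δ)) α Δs q ρ := by
    rw [hPhiQ, hrb, hr]
  refine ⟨⟨hq0, hlt, e1, e2, e3, e4⟩, ?_, ?_⟩
  · rintro ⟨q', ρ', r', rb'⟩ hp
    simp only [isFixedPoint] at hp
    obtain ⟨g1, g2, g3, g4, g5, g6⟩ := hp
    have hc'pos : 0 < ρ' - q' := by linarith
    have hT' : 0 < Δ + (ρ' - q') := by linarith
    have hr'' : r' = α * (Δs + q') / (Δ + (ρ' - q')) ^ 2 := by
      rw [g5, PhiR_eq α Δs q' ρ' Δ hΔ hΔs g1 g2]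
    have hrb'' : rb' = α * (Δs + q') / (Δ + (ρ' - q')) ^ 2 - α / (Δ + (ρ' - q')) := by
      rw [g6, PhiQ_eq α Δs q' ρ' Δ hΔ hΔs g1 g2]
    have hD : 2 * κ + r' - rb' = 2 * κ + α / (Δ + (ρ' - q')) := by
      rw [hr'', hrb'']; ring
    have hDpos : 0 < 2 * κ + r' - rb' := by rw [hD]; positivity
    have hX : ρ' - q' = 1 / (2 * κ + r' - rb') := by rw [g4, g3]; ring
    have hXD : (ρ' - q') * (2 * κ + α / (Δ + (ρ' - q'))) = 1 := by
      rw [← hD, hX]; field_simp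
    have hquad' : 2 * κ * (ρ' - q') ^ 2 + B * (ρ' - q') - Δ = 0 := by
      field_simp at hXD
      linear_combination hXD
    have hfac : ((ρ' - q') - c) * (2 * κ * ((ρ' - q') + c) + B) = 0 := by
      linear_combination hquad' - hquad
    have haux : c * (2 * κ * ((ρ' - q') + c) + B) = 2 * κ * c * (ρ' - q') + Δ := by
      linear_combination hquad
    have hpos2 : 0 < 2 * κ * ((ρ' - q') + c) + B := by
      have h1 : 0 < c * (2 * κ * ((ρ' - q') + c) + B) := by
        rw [haux]
        exact add_pos (mul_pos (by positivity : (0:ℝ) < 2 * κ * c) hc'pos) hΔ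
      by_contra hX
      push_neg at hX
      exact absurd h1 (not_lt.2 (mul_nonpos_iff.mpr (Or.inl ⟨hcpos.le, hX⟩)))
    have hcc : ρ' - q' = c := by
      rcases mul_eq_zero.mp hfac with h' | h'
      · linarith
      · linarith
    have hcd' : 2 * κ + r' - rb' = 1 / c := by
      rw [hD, hcc]
      field_simp
      linear_combination hquad
    have e1'' : q' * ((Δ + c) ^ 2 - α * c ^ 2) = c ^ 2 * (h ^ 2 * (Δ + c) ^ 2 + Δs * α) := by
      have hg := g3
      rw [hcd', hr'', hcc] at hg
      field_simp at hg
      linear_combination hg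
    have hq'q : q' = q := by
      have hz : (q' - q) * ((Δ + c) ^ 2 - α * c ^ 2) = 0 := by
        linear_combination e1'' - hqkey
      rcases mul_eq_zero.mp hz with h' | h'
      · linarith
      · linarith
    have hρ'ρ : ρ' = ρ := by rw [hρ]; linarith
    have hr'r : r' = r := by rw [hr'', hcc, hq'q, hr]
    have hrb'rb : rb' = rb := by rw [hrb'', hcc, hq'q, hrb, hr]
    rw [hq'q, hρ'ρ, hr'r, hrb'rb]
  · intro hpos
    have hnum : 0 < h ^ 2 * (Δ + c) ^ 2 + Δs * α := by
      rcases lt_or_ge 0 (h ^ 2) with h' | h'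
      · nlinarith [mul_pos h' (mul_pos hT hT), mul_nonneg hΔs hα.le]
      · have hh : h ^ 2 = 0 := le_antisymm h' (sq_nonneg h)
        have hΔs' : 0 < Δs := by nlinarith
        nlinarith [mul_pos hΔs' hα]
    rw [hq]
    exact div_pos (by positivity) hden

end
end

section
/- Let 0≤q<ρ and 0≤r̄≤r. If (q,ρ,r,r̄) satisfies the two equations q=(r+h²)/(2κ+r−r̄)² and ρ=1/(2κ+r−r̄)+(r+h²)/(2κ+r−r̄)², then F̄(q,ρ,r,r̄) = F(q,ρ), i.e. the four-variable functional evaluated at such a point equals the two-variable replica-symmetric free energy functional. -/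
open MeasureTheory ProbabilityTheory Real Filter

noncomputable section

/-- The four-variable functional `F̄(q,ρ,r,r̄)`. -/
def Fbar (u : ℝ → ℝ) (α κ h Δs q ρ r rb : ℝ) : ℝ :=
  α * (∫ zt, Real.log (∫ ξ, Real.exp (u (theta Δs q ρ zt ξ)) ∂stdG) ∂stdG) +
  (1 / 2) * ((r + h ^ 2) / (2 * κ + r - rb) - Real.log (2 * κ + r - rb) +
    r * q - rb * ρ + Real.log (2 * Real.pi))

/-- on the domain `0 ≤ q < ρ`, `0 ≤ r̄ ≤ r`, if `(q,ρ,r,r̄)`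
satisfies the first two fixed-point equations then `F̄(q,ρ,r,r̄) = F(q,ρ)`. -/
theorem Fbar_eq_Ffunc
    (α κ h Δs : ℝ) (hα : 0 < α) (hκ : 0 < κ) (hΔs : 0 ≤ Δs)
    (u : ℝ → ℝ) (hmeas : Measurable u) (hneg : ∀ s, u s ≤ 0)
    (q ρ r rb : ℝ) (hq : 0 ≤ q) (hqρ : q < ρ) (hrb : 0 ≤ rb) (hrbr : rb ≤ r)
    (h1 : q = (r + h ^ 2) / (2 * κ + r - rb) ^ 2)
    (h2 : ρ = 1 / (2 * κ + r - rb) + (r + h ^ 2) / (2 * κ + r - rb) ^ 2) :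
    Fbar u α κ h Δs q ρ r rb = Ffunc u α κ h Δs q ρ := by
  have hc : 0 < 2 * κ + r - rb := by linarith
  have hρq : ρ - q = 1 / (2 * κ + r - rb) := by
    rw [h2, h1]; ring
  unfold Fbar Ffunc
  have hlog : Real.log (ρ - q) = - Real.log (2 * κ + r - rb) := by
    rw [hρq, Real.log_div one_ne_zero (ne_of_gt hc), Real.log_one]; ring
  congr 1
  rw [hlog]
  have hq' : q = ρ - 1 / (2 * κ + r - rb) := by linarith [hρq]
  rw [hρq, hq']
  field_simp
  ring

end
end

section
/- If |λ| + ‖Ḡ‖_op²·|η| ≤ κ/(dn), then the map σ⃗ ↦ (κ/2)‖σ⃗‖² − λN R(σ⃗) − ηN Q(σ⃗) from (ℝ^N)ⁿ to ℝ is convex. -/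
open MeasureTheory Real

noncomputable section

/-- `S_k(σ) = (Ḡ σ)_k` for a given matrix `Ḡ`. -/
def SkB {M N : ℕ} (Gb : Fin M → Fin N → ℝ) (σ : Fin N → ℝ) (k : Fin M) : ℝ :=
  ∑ i, Gb k i * σ i

/-- Euclidean norm of a vector in `ℝⁿ`. -/
def vnorm {n : ℕ} (s : Fin n → ℝ) : ℝ := Real.sqrt (∑ ℓ, (s ℓ) ^ 2)

/-- Euclidean norm of a replica configuration `σ⃗ ∈ (ℝ^N)ⁿ`. -/
def cnorm {n N : ℕ} (σv : Fin n → Fin N → ℝ) : ℝ := Real.sqrt (∑ ℓ, ∑ i, (σv ℓ i) ^ 2)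

/-- Generalized overlap `R(σ⃗) = (1/N) Σ_i φ(σ_i¹,…,σ_iⁿ)`. -/
def Rgen {n N : ℕ} (φ : (Fin n → ℝ) → ℝ) (σv : Fin n → Fin N → ℝ) : ℝ :=
  (∑ i, φ (fun ℓ => σv ℓ i)) / (N : ℝ)

/-- Generalized overlap `Q(σ⃗) = (1/N) Σ_k ψ(S_k(σ¹)+z_k,…,S_k(σⁿ)+z_k)`. -/
def QgenB {n M N : ℕ} (ψ : (Fin n → ℝ) → ℝ) (Gb : Fin M → Fin N → ℝ) (z : Fin M → ℝ)
    (σv : Fin n → Fin N → ℝ) : ℝ :=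
  (∑ k, ψ (fun ℓ => SkB Gb (σv ℓ) k + z k)) / (N : ℝ)

/-- Operator norm of an `M × N` matrix acting on Euclidean spaces. -/
def opNorm {M N : ℕ} (A : Fin M → Fin N → ℝ) : ℝ :=
  ‖(LinearMap.toContinuousLinearMap (Matrix.toEuclideanLin (Matrix.of A)))‖

/- ### Auxiliary lemmas -/

lemma line_aff {n : ℕ} (p q : Fin n → ℝ) (t : ℝ) :
    HasDerivAt (fun t : ℝ => p + t • q) q t := by
  simpa using ((hasDerivAt_id t).smul_const q).const_add p

lemma line_d1 {n : ℕ} {φ : (Fin n → ℝ) → ℝ} (hφ : ContDiff ℝ 2 φ) (p q : Fin n → ℝ) (t : ℝ) :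
    HasDerivAt (fun t => φ (p + t • q)) (fderiv ℝ φ (p + t • q) q) t :=
  ((hφ.differentiable two_ne_zero) _).hasFDerivAt.comp_hasDerivAt t (line_aff p q t)

lemma line_d2 {n : ℕ} {φ : (Fin n → ℝ) → ℝ} (hφ : ContDiff ℝ 2 φ) (p q : Fin n → ℝ) (t : ℝ) :
    HasDerivAt (fun t => fderiv ℝ φ (p + t • q) q)
      (fderiv ℝ (fderiv ℝ φ) (p + t • q) q q) t := by
  have hd : Differentiable ℝ (fderiv ℝ φ) :=
    (hφ.fderiv_right (m := 1) (by norm_num)).differentiable one_ne_zero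
  have h1 : HasDerivAt (fun t => fderiv ℝ φ (p + t • q))
      (fderiv ℝ (fderiv ℝ φ) (p + t • q) q) t :=
    (hd _).hasFDerivAt.comp_hasDerivAt t (line_aff p q t)
  simpa using h1.clm_apply (hasDerivAt_const t q)

lemma fderiv_apply_comm {n : ℕ} {φ : (Fin n → ℝ) → ℝ} (hφ : ContDiff ℝ 2 φ)
    (s u w : Fin n → ℝ) :
    fderiv ℝ (fun y => fderiv ℝ φ y w) s u = fderiv ℝ (fderiv ℝ φ) s u w := by
  have hd : Differentiable ℝ (fderiv ℝ φ) :=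
    (hφ.fderiv_right (m := 1) (by norm_num)).differentiable one_ne_zero
  have h : fderiv ℝ (fun y => fderiv ℝ φ y w) s
      = (ContinuousLinearMap.apply ℝ ℝ w).comp (fderiv ℝ (fderiv ℝ φ) s) := by
    have := ((ContinuousLinearMap.apply ℝ ℝ w).hasFDerivAt.comp s (hd s).hasFDerivAt)
    exact this.fderiv
  rw [h]; rfl

lemma vec_decomp {n : ℕ} (q : Fin n → ℝ) : q = ∑ l, q l • (Pi.single l 1 : Fin n → ℝ) := by
  funext j
  simp [Finset.sum_apply, Pi.single_apply]

lemma hess_bound {n : ℕ} {φ : (Fin n → ℝ) → ℝ} (hφ : ContDiff ℝ 2 φ) {d : ℝ} (hd0 : 0 ≤ d)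
    (hφ2 : ∀ (s : Fin n → ℝ) (l l' : Fin n),
      |fderiv ℝ (fun y => fderiv ℝ φ y (Pi.single l' 1)) s (Pi.single l 1)| ≤ d)
    (s q : Fin n → ℝ) :
    |fderiv ℝ (fderiv ℝ φ) s q q| ≤ d * n * ∑ l, (q l) ^ 2 := by
  set B := fderiv ℝ (fderiv ℝ φ) s with hB
  have hexp : B q q = ∑ l, ∑ l', q l * q l' * B (Pi.single l' 1) (Pi.single l 1) := by
    conv_lhs => rw [vec_decomp q]
    simp only [_root_.map_sum, ContinuousLinearMap.map_smul, ContinuousLinearMap.sum_apply,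
      ContinuousLinearMap.smul_apply, smul_eq_mul, Finset.mul_sum]
    exact Finset.sum_congr rfl fun l _ => Finset.sum_congr rfl fun l' _ => by ring
  have hB2 : ∀ l l', |B (Pi.single l 1) (Pi.single l' 1)| ≤ d := by
    intro l l'
    have := hφ2 s l l'
    rwa [fderiv_apply_comm hφ] at this
  have h1 : |B q q| ≤ (∑ l, |q l|) ^ 2 * d := by
    rw [hexp]
    calc |∑ l, ∑ l', q l * q l' * B (Pi.single l' 1) (Pi.single l 1)|
        ≤ ∑ l, |∑ l', q l * q l' * B (Pi.single l' 1) (Pi.single l 1)| :=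
          Finset.abs_sum_le_sum_abs _ _
      _ ≤ ∑ l, ∑ l', |q l * q l' * B (Pi.single l' 1) (Pi.single l 1)| :=
          Finset.sum_le_sum fun l _ => Finset.abs_sum_le_sum_abs _ _
      _ ≤ ∑ l, ∑ l', |q l| * |q l'| * d := by
          refine Finset.sum_le_sum fun l _ => Finset.sum_le_sum fun l' _ => ?_
          rw [abs_mul, abs_mul]
          exact mul_le_mul_of_nonneg_left (hB2 l' l) (by positivity)
      _ = (∑ l, |q l|) ^ 2 * d := by
          rw [sq, Finset.sum_mul_sum, Finset.sum_mul]
          exact Finset.sum_congr rfl fun l _ => by rw [Finset.sum_mul]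
  have h2 : (∑ l, |q l|) ^ 2 ≤ n * ∑ l, (q l) ^ 2 := by
    have := sq_sum_le_card_mul_sum_sq (s := (Finset.univ : Finset (Fin n))) (f := fun l => |q l|)
    simpa [sq_abs] using this
  calc |B q q| ≤ (∑ l, |q l|) ^ 2 * d := h1
    _ ≤ (n * ∑ l, (q l) ^ 2) * d := mul_le_mul_of_nonneg_right h2 hd0
    _ = d * n * ∑ l, (q l) ^ 2 := by ring

lemma opNorm_bound {M N : ℕ} (Gb : Fin M → Fin N → ℝ) (u : Fin N → ℝ) :
    ∑ k, (SkB Gb u k) ^ 2 ≤ opNorm Gb ^ 2 * ∑ j, (u j) ^ 2 := by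
  set A := LinearMap.toContinuousLinearMap (Matrix.toEuclideanLin (Matrix.of Gb)) with hA
  set u' : EuclideanSpace ℝ (Fin N) := (WithLp.equiv 2 (Fin N → ℝ)).symm u with hu
  have h := A.le_opNorm u'
  have hAu : ∀ k, A u' k = SkB Gb u k := by
    intro k
    simp [hA, hu, Matrix.toEuclideanLin_apply, Matrix.mulVec, dotProduct, SkB]
  have hn1 : ‖A u'‖ ^ 2 = ∑ k, (SkB Gb u k) ^ 2 := by
    rw [EuclideanSpace.norm_eq, Real.sq_sqrt (by positivity)]
    exact Finset.sum_congr rfl fun k _ => by rw [hAu k]; simp [sq_abs]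
  have hn2 : ‖u'‖ ^ 2 = ∑ j, (u j) ^ 2 := by
    rw [EuclideanSpace.norm_eq, Real.sq_sqrt (by positivity)]
    refine Finset.sum_congr rfl fun j _ => by simp [hu, sq_abs, WithLp.equiv, Equiv.refl]
  calc ∑ k, (SkB Gb u k) ^ 2 = ‖A u'‖ ^ 2 := hn1.symm
    _ ≤ (‖A‖ * ‖u'‖) ^ 2 := by
        nlinarith [norm_nonneg (A u'), norm_nonneg u', A.le_opNorm u']
    _ = opNorm Gb ^ 2 * ∑ j, (u j) ^ 2 := by rw [mul_pow, hn2, opNorm, hA]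

lemma convexOn_univ_of_line {E : Type*} [AddCommGroup E] [Module ℝ E] (f : E → ℝ)
    (h : ∀ x v : E, ConvexOn ℝ Set.univ fun t : ℝ => f (x + t • v)) :
    ConvexOn ℝ Set.univ f := by
  refine ⟨convex_univ, fun x _ y _ a b ha hb hab => ?_⟩
  have h2 := (h x (y - x)).2 (Set.mem_univ (0 : ℝ)) (Set.mem_univ (1 : ℝ)) ha hb hab
  simp only [smul_eq_mul, mul_zero, mul_one, zero_add, zero_smul, add_zero, one_smul] at h2
  have e1 : x + b • (y - x) = a • x + b • y := by
    have hba : a = 1 - b := by linarith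
    subst hba
    rw [smul_sub, sub_smul, one_smul]
    abel
  have e3 : x + (y - x) = y := by abel
  rw [e1, e3] at h2
  exact h2

/-- Lemma 4.5, convexity: if `|λ| + ‖Ḡ‖_op²|η| ≤ κ/(dn)`, the
map `σ⃗ ↦ (κ/2)‖σ⃗‖² − λN R(σ⃗) − ηN Q(σ⃗)` is convex. -/
theorem coupled_overlap_convexity
    (n N M : ℕ) (hn : 1 ≤ n) (κ d : ℝ) (hκ : 0 < κ) (hd : 0 < d)
    (Gb : Fin M → Fin N → ℝ) (z : Fin M → ℝ)
    (φ ψ : (Fin n → ℝ) → ℝ) (hφ : ContDiff ℝ 2 φ) (hψ : ContDiff ℝ 2 ψ)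
    (hφ2 : ∀ (s : Fin n → ℝ) (l l' : Fin n),
      |fderiv ℝ (fun y => fderiv ℝ φ y (Pi.single l' 1)) s (Pi.single l 1)| ≤ d)
    (hψ2 : ∀ (s : Fin n → ℝ) (l l' : Fin n),
      |fderiv ℝ (fun y => fderiv ℝ ψ y (Pi.single l' 1)) s (Pi.single l 1)| ≤ d)
    (lam η : ℝ)
    (hcond : |lam| + (opNorm Gb) ^ 2 * |η| ≤ κ / (d * n)) :
    ConvexOn ℝ Set.univ (fun σv : Fin n → Fin N → ℝ =>
      κ / 2 * (∑ ℓ, ∑ i, (σv ℓ i) ^ 2) - lam * (N : ℝ) * Rgen φ σv -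
        η * (N : ℝ) * QgenB ψ Gb z σv) := by
  rcases Nat.eq_zero_or_pos N with hN | hN
  · -- trivial case: domain is a subsingleton
    subst hN
    refine ⟨convex_univ, fun x _ y _ a b ha hb hab => ?_⟩
    have hxy : x = y := by
      funext ℓ i; exact absurd i.2 (by omega)
    subst hxy
    have hx : a • x + b • x = x := by rw [← add_smul, hab, one_smul]
    rw [hx, smul_eq_mul, smul_eq_mul, ← add_mul, hab, one_mul]
  · have hNne : (N : ℝ) ≠ 0 := Nat.cast_ne_zero.mpr hN.ne'
    have heq : (fun σv : Fin n → Fin N → ℝ =>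
        κ / 2 * (∑ ℓ, ∑ i, (σv ℓ i) ^ 2) - lam * (N : ℝ) * Rgen φ σv -
          η * (N : ℝ) * QgenB ψ Gb z σv)
        = fun σv => κ / 2 * (∑ ℓ, ∑ i, (σv ℓ i) ^ 2)
            - lam * ∑ i, φ (fun ℓ => σv ℓ i)
            - η * ∑ k, ψ (fun ℓ => SkB Gb (σv ℓ) k + z k) := by
      funext σv
      rw [Rgen, QgenB]
      field_simp
    rw [heq]
    apply convexOn_univ_of_line
    intro x v
    -- explicit form of the restriction to the line
    have hgeq : (fun t : ℝ => κ / 2 * (∑ ℓ, ∑ i, ((x + t • v) ℓ i) ^ 2)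
            - lam * ∑ i, φ (fun ℓ => (x + t • v) ℓ i)
            - η * ∑ k, ψ (fun ℓ => SkB Gb ((x + t • v) ℓ) k + z k))
        = fun t : ℝ => κ / 2 * (∑ ℓ, ∑ i, (x ℓ i + t * v ℓ i) ^ 2)
            - lam * ∑ i, φ ((fun ℓ => x ℓ i) + t • fun ℓ => v ℓ i)
            - η * ∑ k, ψ ((fun ℓ => SkB Gb (x ℓ) k + z k) + t • fun ℓ => SkB Gb (v ℓ) k) := by
      funext t
      have e1 : (∑ ℓ, ∑ i, ((x + t • v) ℓ i) ^ 2) = ∑ ℓ, ∑ i, (x ℓ i + t * v ℓ i) ^ 2 :=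
        Finset.sum_congr rfl fun ℓ _ => Finset.sum_congr rfl fun i _ => by simp
      have e2 : (∑ i, φ fun ℓ => (x + t • v) ℓ i)
          = ∑ i, φ ((fun ℓ => x ℓ i) + t • fun ℓ => v ℓ i) :=
        Finset.sum_congr rfl fun i _ => congrArg φ (funext fun ℓ => by simp)
      have e3 : (∑ k, ψ fun ℓ => SkB Gb ((x + t • v) ℓ) k + z k)
          = ∑ k, ψ ((fun ℓ => SkB Gb (x ℓ) k + z k) + t • fun ℓ => SkB Gb (v ℓ) k) := by
        refine Finset.sum_congr rfl fun k _ => congrArg ψ (funext fun ℓ => ?_)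
        simp only [SkB, Pi.add_apply, Pi.smul_apply, smul_eq_mul, mul_add,
          Finset.sum_add_distrib, Finset.mul_sum]
        rw [add_right_comm]
        congr 1
        exact Finset.sum_congr rfl fun j _ => by ring
      rw [e1, e2, e3]
    rw [hgeq]
    set G : ℝ → ℝ := fun t : ℝ => κ / 2 * (∑ ℓ, ∑ i, (x ℓ i + t * v ℓ i) ^ 2)
            - lam * ∑ i, φ ((fun ℓ => x ℓ i) + t • fun ℓ => v ℓ i)
            - η * ∑ k, ψ ((fun ℓ => SkB Gb (x ℓ) k + z k) + t • fun ℓ => SkB Gb (v ℓ) k)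
      with hG
    set g1 : ℝ → ℝ := fun t => κ / 2 * (∑ ℓ, ∑ i, 2 * (x ℓ i + t * v ℓ i) * v ℓ i)
            - lam * ∑ i, fderiv ℝ φ ((fun ℓ => x ℓ i) + t • fun ℓ => v ℓ i) (fun ℓ => v ℓ i)
            - η * ∑ k, fderiv ℝ ψ ((fun ℓ => SkB Gb (x ℓ) k + z k)
                + t • fun ℓ => SkB Gb (v ℓ) k) (fun ℓ => SkB Gb (v ℓ) k)
      with hg1def
    set g2 : ℝ → ℝ := fun t => κ / 2 * (∑ ℓ, ∑ i, 2 * v ℓ i * v ℓ i)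
            - lam * ∑ i, fderiv ℝ (fderiv ℝ φ) ((fun ℓ => x ℓ i) + t • fun ℓ => v ℓ i)
                (fun ℓ => v ℓ i) (fun ℓ => v ℓ i)
            - η * ∑ k, fderiv ℝ (fderiv ℝ ψ) ((fun ℓ => SkB Gb (x ℓ) k + z k)
                + t • fun ℓ => SkB Gb (v ℓ) k) (fun ℓ => SkB Gb (v ℓ) k)
                (fun ℓ => SkB Gb (v ℓ) k)
      with hg2def
    have hb : ∀ (a b t : ℝ), HasDerivAt (fun t : ℝ => a + t * b) b t := by
      intro a b t
      simpa using ((hasDerivAt_id t).mul_const b).const_add a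
    have hD1 : ∀ t, HasDerivAt G (g1 t) t := by
      intro t
      refine HasDerivAt.sub (HasDerivAt.sub ?_ ?_) ?_
      · refine HasDerivAt.const_mul _ ?_
        refine HasDerivAt.fun_sum fun ℓ _ => HasDerivAt.fun_sum fun i _ => ?_
        have := (hb (x ℓ i) (v ℓ i) t).fun_pow 2
        simpa [mul_comm, mul_assoc] using this
      · exact HasDerivAt.const_mul _ (HasDerivAt.fun_sum fun i _ => line_d1 hφ _ _ t)
      · exact HasDerivAt.const_mul _ (HasDerivAt.fun_sum fun k _ => line_d1 hψ _ _ t)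
    have hD2 : ∀ t, HasDerivAt g1 (g2 t) t := by
      intro t
      refine HasDerivAt.sub (HasDerivAt.sub ?_ ?_) ?_
      · refine HasDerivAt.const_mul _ ?_
        refine HasDerivAt.fun_sum fun ℓ _ => HasDerivAt.fun_sum fun i _ => ?_
        have := ((hb (x ℓ i) (v ℓ i) t).const_mul 2).mul_const (v ℓ i)
        simpa [mul_comm, mul_assoc] using this
      · exact HasDerivAt.const_mul _ (HasDerivAt.fun_sum fun i _ => line_d2 hφ _ _ t)
      · exact HasDerivAt.const_mul _ (HasDerivAt.fun_sum fun k _ => line_d2 hψ _ _ t)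
    have hderiv : deriv G = g1 := funext fun t => (hD1 t).deriv
    apply convexOn_univ_of_deriv2_nonneg
    · exact fun t => (hD1 t).differentiableAt
    · rw [hderiv]; exact fun t => (hD2 t).differentiableAt
    · intro t
      have h2 : deriv^[2] G t = g2 t := by
        rw [show (deriv^[2] G) = deriv (deriv G) from rfl, hderiv]
        exact (hD2 t).deriv
      rw [h2, hg2def]
      -- now the quantitative bound
      set V : ℝ := ∑ ℓ, ∑ i, (v ℓ i) ^ 2 with hV
      have hV0 : 0 ≤ V := Finset.sum_nonneg fun ℓ _ => Finset.sum_nonneg fun i _ => sq_nonneg _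
      have hquad : (∑ ℓ, ∑ i, 2 * v ℓ i * v ℓ i) = 2 * V := by
        rw [hV, Finset.mul_sum]
        refine Finset.sum_congr rfl fun ℓ _ => ?_
        rw [Finset.mul_sum]
        exact Finset.sum_congr rfl fun i _ => by ring
      set Bsum : ℝ := ∑ i, fderiv ℝ (fderiv ℝ φ) ((fun ℓ => x ℓ i) + t • fun ℓ => v ℓ i)
          (fun ℓ => v ℓ i) (fun ℓ => v ℓ i) with hBsum
      set Csum : ℝ := ∑ k, fderiv ℝ (fderiv ℝ ψ) ((fun ℓ => SkB Gb (x ℓ) k + z k)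
          + t • fun ℓ => SkB Gb (v ℓ) k) (fun ℓ => SkB Gb (v ℓ) k)
          (fun ℓ => SkB Gb (v ℓ) k) with hCsum
      have hBb : |Bsum| ≤ d * n * V := by
        calc |Bsum| ≤ ∑ i, |fderiv ℝ (fderiv ℝ φ) ((fun ℓ => x ℓ i) + t • fun ℓ => v ℓ i)
              (fun ℓ => v ℓ i) (fun ℓ => v ℓ i)| := Finset.abs_sum_le_sum_abs _ _
          _ ≤ ∑ i, d * n * ∑ ℓ, (v ℓ i) ^ 2 :=
              Finset.sum_le_sum fun i _ => hess_bound hφ hd.le hφ2 _ _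
          _ = d * n * V := by
              rw [← Finset.mul_sum, hV, Finset.sum_comm]
      have hCb : |Csum| ≤ d * n * (opNorm Gb ^ 2 * V) := by
        calc |Csum| ≤ ∑ k, |fderiv ℝ (fderiv ℝ ψ) ((fun ℓ => SkB Gb (x ℓ) k + z k)
              + t • fun ℓ => SkB Gb (v ℓ) k) (fun ℓ => SkB Gb (v ℓ) k)
              (fun ℓ => SkB Gb (v ℓ) k)| := Finset.abs_sum_le_sum_abs _ _
          _ ≤ ∑ k, d * n * ∑ ℓ, (SkB Gb (v ℓ) k) ^ 2 :=
              Finset.sum_le_sum fun k _ => hess_bound hψ hd.le hψ2 _ _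
          _ = d * n * ∑ ℓ, ∑ k, (SkB Gb (v ℓ) k) ^ 2 := by
              rw [← Finset.mul_sum, Finset.sum_comm]
          _ ≤ d * n * (opNorm Gb ^ 2 * V) := by
              refine mul_le_mul_of_nonneg_left ?_ (by positivity)
              rw [hV, Finset.mul_sum]
              exact Finset.sum_le_sum fun ℓ _ => opNorm_bound Gb (v ℓ)
      have hdn : (0 : ℝ) < d * n := by
        have : (1 : ℝ) ≤ (n : ℝ) := by exact_mod_cast hn
        nlinarith
      have hcond' : (|lam| + opNorm Gb ^ 2 * |η|) * (d * n) ≤ κ :=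
        (le_div_iff₀ hdn).mp hcond
      have hlb : lam * Bsum ≤ |lam| * (d * n * V) := by
        calc lam * Bsum ≤ |lam * Bsum| := le_abs_self _
          _ = |lam| * |Bsum| := abs_mul _ _
          _ ≤ |lam| * (d * n * V) := mul_le_mul_of_nonneg_left hBb (abs_nonneg _)
      have hcb : η * Csum ≤ |η| * (d * n * (opNorm Gb ^ 2 * V)) := by
        calc η * Csum ≤ |η * Csum| := le_abs_self _
          _ = |η| * |Csum| := abs_mul _ _
          _ ≤ |η| * (d * n * (opNorm Gb ^ 2 * V)) :=
              mul_le_mul_of_nonneg_left hCb (abs_nonneg _)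
      rw [hquad]
      nlinarith [mul_le_mul_of_nonneg_right hcond' hV0]

end
end
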